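/- If 𝒥^lin_{n,3} = 𝒥_{n,3} for every n ≥ 1, then 𝒥^lin_{n,d} = 𝒥_{n,d} for every n ≥ 1 and every d ≥ 1; that is, if every polynomial system of total degree at most 3 (in any number of variables) with constant nonzero Jacobian determinant is invertible with polynomial inverse, then the same holds for polynomial systems of arbitrary degree. -/

import Mathlib

open MvPolynomial

/-- The Jacobian determinant of a polynomial system `F : ℂⁿ → ℂⁿ`,
as a polynomial: `det (∂F_j/∂z_i)_{i,j}`. -/
noncomputable def jacDet {n : ℕ} (F : Fin n → MvPolynomial (Fin n) ℂ) :
    MvPolynomial (Fin n) ℂ :=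
  Matrix.det (Matrix.of fun i j => pderiv i (F j))

/-- `𝒫_{n,d}`: polynomial systems `ℂⁿ → ℂⁿ` of total degree at most `d`. -/
def PolySys (n d : ℕ) : Set (Fin n → MvPolynomial (Fin n) ℂ) :=
  {F | ∀ i, (F i).totalDegree ≤ d}

/-- `𝒥^lin_{n,d}`: systems in `𝒫_{n,d}` whose Jacobian determinant is a
nonzero constant. -/
def JlinSet (n d : ℕ) : Set (Fin n → MvPolynomial (Fin n) ℂ) :=
  {F | F ∈ PolySys n d ∧ ∃ c : ℂ, c ≠ 0 ∧ jacDet F = C c}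

/-- `𝒥_{n,d}`: systems in `𝒫_{n,d}` invertible with polynomial inverse. -/
def JSet (n d : ℕ) : Set (Fin n → MvPolynomial (Fin n) ℂ) :=
  {F | F ∈ PolySys n d ∧ ∃ G : Fin n → MvPolynomial (Fin n) ℂ,
    (∀ i, bind₁ F (G i) = X i) ∧ (∀ i, bind₁ G (F i) = X i)}

namespace BCWRed
set_option linter.unusedSectionVars false

/-- Abbreviation for polynomial rings over `ℂ`. -/
abbrev P (σ : Type) : Type := MvPolynomial σ ℂ

variable {σ : Type} [Fintype σ] [DecidableEq σ]

/-- Jacobian matrix. -/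
noncomputable def jmat (F : σ → P σ) : Matrix σ σ (P σ) :=
  Matrix.of fun i j => pderiv i (F j)

/-- Jacobian determinant (generic index type version). -/
noncomputable def jdet (F : σ → P σ) : P σ := (jmat F).det

lemma jacDet_eq_jdet {n : ℕ} (F : Fin n → MvPolynomial (Fin n) ℂ) :
    jacDet F = jdet F := rfl

/-- Composition of polynomial systems: `(pcomp A B) = A ∘ B` pointwise. -/
noncomputable def pcomp (A B : σ → P σ) : σ → P σ := fun k => bind₁ B (A k)

lemma pcomp_assoc (A B C : σ → P σ) :
    pcomp (pcomp A B) C = pcomp A (pcomp B C) := by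
  funext k
  simp only [pcomp]
  exact bind₁_bind₁ B C (A k)

lemma pcomp_X_left (A : σ → P σ) : pcomp X A = A :=
  funext fun k => by simp only [pcomp]; exact bind₁_X_right A k

lemma pcomp_X_right (A : σ → P σ) : pcomp A X = A := by
  funext k
  simp only [pcomp, bind₁_X_left, AlgHom.id_apply]

/-- Mutually inverse systems. -/
def IsInv (A B : σ → P σ) : Prop := pcomp A B = X ∧ pcomp B A = X

lemma IsInv.symm {A B : σ → P σ} (h : IsInv A B) : IsInv B A := ⟨h.2, h.1⟩

lemma IsInv.comp {A A' B B' : σ → P σ} (hA : IsInv A A') (hB : IsInv B B') :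
    IsInv (pcomp A B) (pcomp B' A') := by
  constructor
  · rw [pcomp_assoc, ← pcomp_assoc B B' A', hB.1, pcomp_X_left, hA.1]
  · rw [pcomp_assoc, ← pcomp_assoc A' A B, hA.2, pcomp_X_left, hB.2]

/-- `aeval` composed with `aeval`. -/
lemma aeval_aeval' {σ τ υ : Type} (f : σ → P τ) (g : τ → P υ) (p : P σ) :
    aeval g (aeval f p) = aeval (fun i => aeval g (f i)) p :=
  aeval_bind₁ g f p

/-- The multivariate chain rule. -/
lemma pderiv_bind (B : σ → P σ) (i : σ) (p : P σ) :
    pderiv i (bind₁ B p) = ∑ k, bind₁ B (pderiv k p) * pderiv i (B k) := by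
  induction p using MvPolynomial.induction_on with
  | C a => simp
  | add p q hp hq =>
      simp only [map_add, hp, hq, ← Finset.sum_add_distrib, add_mul]
  | mul_X p j hp =>
      rw [map_mul, bind₁_X_right, pderiv_mul, hp]
      have hk : ∀ k : σ, bind₁ B (pderiv k (p * X j)) * pderiv i (B k) =
          (bind₁ B (pderiv k p) * pderiv i (B k)) * B j
            + (if k = j then bind₁ B p * pderiv i (B k) else 0) := by
        intro k
        by_cases hkj : k = j
        · subst hkj
          simp only [pderiv_mul, pderiv_X_self, mul_one, map_add, map_mul, bind₁_X_right,
            if_pos rfl]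
          simp only [if_true]
          ring
        · simp only [pderiv_mul, pderiv_X_of_ne (Ne.symm hkj), mul_zero, add_zero, map_mul,
            bind₁_X_right, if_neg hkj]
          ring
      rw [Finset.sum_congr rfl fun k _ => hk k, Finset.sum_add_distrib,
        ← Finset.sum_mul, Finset.sum_ite_eq' Finset.univ j
          (fun k => bind₁ B p * pderiv i (B k))]
      simp [add_comm]

/-- Jacobian matrix of a composition. -/
lemma jmat_pcomp (A B : σ → P σ) :
    jmat (pcomp A B) = jmat B * (jmat A).map (bind₁ B) := by
  refine Matrix.ext fun i j => ?_
  simp only [jmat, pcomp, Matrix.of_apply, Matrix.mul_apply, Matrix.map_apply]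
  rw [pderiv_bind B i (A j)]
  exact Finset.sum_congr rfl fun k _ => mul_comm _ _

/-- Jacobian determinant is multiplicative under composition. -/
lemma jdet_pcomp (A B : σ → P σ) :
    jdet (pcomp A B) = jdet B * bind₁ B (jdet A) := by
  rw [jdet, jmat_pcomp, Matrix.det_mul]
  congr 1
  rw [jdet, AlgHom.map_det (bind₁ B) (jmat A)]
  rfl

lemma jmat_X : jmat (X : σ → P σ) = 1 := by
  refine Matrix.ext fun i j => ?_
  simp only [jmat, Matrix.of_apply, pderiv_X, Matrix.one_apply, Pi.single_apply]
  split_ifs with h1 h2 h2 <;> first | rfl | (exact absurd h1.symm h2) | (exact absurd h2.symm h1)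

lemma jdet_X : jdet (X : σ → P σ) = 1 := by rw [jdet, jmat_X, Matrix.det_one]

/-- An elementary system: replace coordinate `j` by `X j + q`. -/
noncomputable def elem (j : σ) (q : P σ) : σ → P σ :=
  fun k => if k = j then X j + q else X k

lemma elem_self (j : σ) (q : P σ) : elem j q j = X j + q := if_pos rfl

lemma elem_ne (j : σ) (q : P σ) {k : σ} (h : k ≠ j) : elem j q k = X k := if_neg h

/-- `bind₁` along a system fixing the variables of a renamed polynomial. -/
lemma bind₁_fix {γ : Type} (A : σ → P σ) (u : γ → σ) (hA : ∀ g, A (u g) = X (u g))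
    (r : MvPolynomial γ ℂ) : bind₁ A (rename u r) = rename u r := by
  show aeval A (rename u r) = rename u r
  rw [aeval_rename]
  have : (A ∘ u) = (X ∘ u) := funext hA
  rw [this, rename_eq_aeval]

lemma bind₁_elem_rename {γ : Type} (j : σ) (q : P σ) (u : γ → σ) (hu : ∀ g, u g ≠ j)
    (r : MvPolynomial γ ℂ) : bind₁ (elem j q) (rename u r) = rename u r :=
  bind₁_fix _ u (fun g => elem_ne j q (hu g)) r

/-- Determinant of an elementary system is 1. -/
lemma jdet_elem (j : σ) (q : P σ) (hq : pderiv j q = 0) : jdet (elem j q) = 1 := by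
  have hm : jmat (elem j q) = 1 + Matrix.replicateCol Unit (fun i => pderiv i q) *
      Matrix.replicateRow Unit (fun k => if k = j then (1 : P σ) else 0) := by
    refine Matrix.ext fun i k => ?_
    simp only [jmat, Matrix.of_apply, Matrix.add_apply, Matrix.mul_apply, Matrix.replicateCol_apply,
      Matrix.replicateRow_apply, Finset.sum_const, Finset.card_univ, Fintype.card_unit, one_smul]
    by_cases hk : k = j
    · subst hk
      rw [elem_self, if_pos rfl, mul_one, map_add, pderiv_X, Matrix.one_apply, Pi.single_apply]
      by_cases hik : i = k
      · subst hik; simp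
      · rw [if_neg hik, if_neg (fun hc => hik hc.symm)]
    · rw [elem_ne j q hk, if_neg hk, mul_zero, add_zero, pderiv_X, Matrix.one_apply,
        Pi.single_apply]
      by_cases hik : i = k
      · subst hik; simp
      · rw [if_neg hik, if_neg (fun hc => hik hc.symm)]
  rw [jdet, hm, Matrix.det_one_add_replicateCol_mul_replicateRow]
  have hdp : dotProduct (fun k => if k = j then (1 : P σ) else 0)
      (fun i => pderiv i q) = pderiv j q := by
    simp [dotProduct, Finset.sum_ite_eq']
  rw [hdp, hq, add_zero]

/-- Elementary systems are invertible. -/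
lemma isInv_elem (j : σ) (q : P σ) (h1 : bind₁ (elem j q) q = q)
    (h2 : bind₁ (elem j (-q)) q = q) : IsInv (elem j q) (elem j (-q)) := by
  constructor
  · funext k
    show bind₁ (elem j (-q)) (elem j q k) = X k
    by_cases hk : k = j
    · subst hk
      rw [elem_self, map_add, bind₁_X_right, elem_self, h2]
      ring
    · rw [elem_ne j q hk, bind₁_X_right, elem_ne j (-q) hk]
  · funext k
    show bind₁ (elem j q) (elem j (-q) k) = X k
    by_cases hk : k = j
    · subst hk
      rw [elem_self, map_add, bind₁_X_right, elem_self, map_neg, h1]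
      ring
    · rw [elem_ne j (-q) hk, bind₁_X_right, elem_ne j q hk]

lemma isInv_elem_rename {γ : Type} (j : σ) (u : γ → σ) (hu : ∀ g, u g ≠ j)
    (r : MvPolynomial γ ℂ) :
    IsInv (elem j (rename u r)) (elem j (-(rename u r))) := by
  apply isInv_elem
  · exact bind₁_elem_rename j _ u hu r
  · exact bind₁_elem_rename j _ u hu r

/-- pderiv of a renamed polynomial w.r.t. a variable not in the range. -/
lemma pderiv_rename_notin {γ : Type} (u : γ → σ) {j : σ} (hj : ∀ g, u g ≠ j)
    (r : MvPolynomial γ ℂ) : pderiv j (rename u r) = 0 := by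
  apply pderiv_eq_zero_of_notMem_vars
  intro hmem
  obtain ⟨g, _, hg⟩ := Finset.mem_image.mp (vars_rename u r hmem)
  exact hj g hg

/-- Extend a system by two extra (identity) coordinates. -/
noncomputable def extend (F : σ → P σ) : (σ ⊕ Bool) → P (σ ⊕ Bool) :=
  Sum.elim (fun i => rename Sum.inl (F i)) (fun b => X (Sum.inr b))

lemma jmat_extend (F : σ → P σ) :
    jmat (extend F) = Matrix.fromBlocks ((jmat F).map (rename Sum.inl)) 0 0 1 := by
  refine Matrix.ext fun i j => ?_
  cases i with
  | inl i =>
    cases j with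
    | inl j =>
      show pderiv (Sum.inl i) (rename Sum.inl (F j)) = rename Sum.inl (pderiv i (F j))
      exact pderiv_rename Sum.inl_injective i (F j)
    | inr b =>
      show pderiv (Sum.inl i) (X (Sum.inr b)) = 0
      exact pderiv_X_of_ne (by simp)
  | inr b =>
    cases j with
    | inl j =>
      show pderiv (Sum.inr b) (rename Sum.inl (F j)) = 0
      exact pderiv_rename_notin Sum.inl (fun g => by simp) (F j)
    | inr b' =>
      show pderiv (Sum.inr b) (X (Sum.inr b')) = (1 : Matrix Bool Bool (P (σ ⊕ Bool))) b b'
      rw [pderiv_X, Matrix.one_apply, Pi.single_apply]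
      by_cases hb : b = b'
      · subst hb; simp
      · rw [if_neg hb, if_neg (fun hc => hb (Sum.inr_injective hc.symm))]

lemma jdet_extend (F : σ → P σ) : jdet (extend F) = rename Sum.inl (jdet F) := by
  rw [jdet, jmat_extend, Matrix.det_fromBlocks_zero₂₁, Matrix.det_one, mul_one, jdet,
    AlgHom.map_det (rename Sum.inl) (jmat F)]
  rfl

/-- From an inverse of the extended system, produce an inverse of the original one. -/
lemma inv_of_extend (F : σ → P σ) (Gt : (σ ⊕ Bool) → P (σ ⊕ Bool))
    (hinv : IsInv (extend F) Gt) : ∃ G : σ → P σ, IsInv F G := by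
  classical
  refine ⟨fun i => aeval (Sum.elim X fun _ : Bool => (0 : P σ)) (Gt (Sum.inl i)), ?_, ?_⟩
  · funext k
    show bind₁ (fun i => aeval (Sum.elim X fun _ : Bool => (0 : P σ)) (Gt (Sum.inl i))) (F k)
      = X k
    have h1 : bind₁ Gt (extend F (Sum.inl k)) = X (Sum.inl k) := congrFun hinv.1 (Sum.inl k)
    have h1' : aeval (Gt ∘ Sum.inl) (F k) = X (Sum.inl k) := by
      rw [← aeval_rename]; exact h1
    have h := congrArg (aeval (Sum.elim X fun _ : Bool => (0 : P σ))) h1'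
    rw [aeval_aeval'] at h
    simpa using h
  · funext k
    show bind₁ F (aeval (Sum.elim X fun _ : Bool => (0 : P σ)) (Gt (Sum.inl k))) = X k
    have h2 : aeval (extend F) (Gt (Sum.inl k)) = X (Sum.inl k) := congrFun hinv.2 (Sum.inl k)
    have key : aeval F (aeval (Sum.elim X fun _ : Bool => (0 : P σ)) (Gt (Sum.inl k)))
        = aeval (Sum.elim X fun _ : Bool => (0 : P σ)) (aeval (extend F) (Gt (Sum.inl k))) := by
      rw [aeval_aeval', aeval_aeval']
      have harg : (fun i => aeval F ((Sum.elim X fun _ : Bool => (0 : P σ)) i))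
          = fun i => aeval (Sum.elim X fun _ : Bool => (0 : P σ)) (extend F i) := by
        funext t
        cases t with
        | inl s =>
          show aeval F (X s) = aeval _ (rename Sum.inl (F s))
          rw [aeval_rename, aeval_X]
          show F s = aeval ((Sum.elim X fun _ : Bool => (0 : P σ)) ∘ Sum.inl) (F s)
          rw [Sum.elim_comp_inl, aeval_X_left_apply]
        | inr b => simp [extend]
      rw [harg]
    show aeval F _ = X k
    rw [key, h2]
    simp

/-- Degree of a monomial exponent. -/
def dm (m : σ →₀ ℕ) : ℕ := m.sum fun _ e => e

omit [Fintype σ] [DecidableEq σ]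

lemma dm_add (a b : σ →₀ ℕ) : dm (a + b) = dm a + dm b :=
  Finsupp.sum_add_index' (fun _ => rfl) (fun _ _ _ => rfl)

lemma dm_single (i : σ) (k : ℕ) : dm (Finsupp.single i k) = k :=
  Finsupp.sum_single_index rfl

lemma dm_mapDomain {γ : Type} (u : γ → σ) (m : γ →₀ ℕ) :
    dm (Finsupp.mapDomain u m) = dm m :=
  Finsupp.sum_mapDomain_index (fun _ => rfl) (fun _ _ _ => rfl)

/-- Weight of a degree. -/
def w (k : ℕ) : ℕ := if 4 ≤ k then 4 ^ k else 0

lemma w_le (k : ℕ) : w k ≤ 4 ^ k := by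
  unfold w; split_ifs <;> simp

lemma w_eq_zero_of_le {k : ℕ} (h : k ≤ 3) : w k = 0 := by
  unfold w; rw [if_neg (by omega)]

/-- Measure of a polynomial: total weight of its high-degree monomials. -/
noncomputable def μp (p : P σ) : ℕ := ∑ m ∈ p.support, w (dm m)

/-- Measure of a system. -/
noncomputable def μ [Fintype σ] (F : σ → P σ) : ℕ := ∑ k, μp (F k)

lemma totalDegree_le_of_μp_zero {p : P σ} (hp : μp p = 0) : p.totalDegree ≤ 3 := by
  rw [totalDegree]
  refine Finset.sup_le fun m hm => ?_
  by_contra hlt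
  have h4 : 4 ≤ dm m := by
    unfold dm; omega
  have := (Finset.sum_eq_zero_iff.mp hp) m hm
  rw [w, if_pos h4] at this
  exact absurd this (by positivity)

lemma μp_zero_of_totalDegree_le {p : P σ} (hp : p.totalDegree ≤ 3) : μp p = 0 := by
  refine Finset.sum_eq_zero fun m hm => ?_
  refine w_eq_zero_of_le ?_
  exact le_trans (le_totalDegree hm) hp

lemma μp_rename {γ : Type} [DecidableEq σ] (u : γ → σ) (hu : Function.Injective u)
    (p : MvPolynomial γ ℂ) : μp (rename u p) = μp p := by
  classical
  rw [μp, support_rename_of_injective hu, Finset.sum_image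
    (fun a _ b _ hab => Finsupp.mapDomain_injective hu hab)]
  exact Finset.sum_congr rfl fun m _ => by rw [dm_mapDomain]

lemma μp_le_of_support_subset {p q : P σ} (h : p.support ⊆ q.support) : μp p ≤ μp q :=
  Finset.sum_le_sum_of_subset h

lemma μp_add_le (p q : P σ) : μp (p + q) ≤ μp p + μp q := by
  classical
  have h1 : μp (p + q) ≤ ∑ m ∈ p.support ∪ q.support, w (dm m) :=
    Finset.sum_le_sum_of_subset support_add
  have h2 : ∑ m ∈ p.support ∪ q.support, w (dm m)
      + ∑ m ∈ p.support ∩ q.support, w (dm m) = μp p + μp q :=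
    Finset.sum_union_inter
  omega

lemma μp_neg (p : P σ) : μp (-p) = μp p := by
  rw [μp, support_neg]; rfl

lemma μp_monomial_le (m : σ →₀ ℕ) (c : ℂ) : μp (monomial m c) ≤ w (dm m) := by
  classical
  rw [μp, support_monomial]
  split_ifs <;> simp

lemma μp_erase {p : P σ} {m₀ : σ →₀ ℕ} (hm : m₀ ∈ p.support) :
    μp (p - monomial m₀ (coeff m₀ p)) + w (dm m₀) = μp p := by
  classical
  have hs : (p - monomial m₀ (coeff m₀ p)).support = p.support.erase m₀ := by
    ext m
    simp only [mem_support_iff, coeff_sub, coeff_monomial, Finset.mem_erase]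
    by_cases hmm : m₀ = m
    · subst hmm; simp
    · rw [if_neg hmm, sub_zero]
      exact ⟨fun h => ⟨fun hc => hmm hc.symm, h⟩, fun h => h.2⟩
  rw [μp, hs]
  exact Finset.sum_erase_add _ _ hm

/-- Split a monomial of degree `≥ 4` into a degree-2 part and a rest of degree `≥ 2`. -/
lemma exists_split (m₀ : σ →₀ ℕ) (h4 : 4 ≤ dm m₀) :
    ∃ β γ : σ →₀ ℕ, β + γ = m₀ ∧ dm β = 2 ∧ 2 ≤ dm γ := by
  classical
  have dm_zero : dm (0 : σ →₀ ℕ) = 0 := Finsupp.sum_zero_index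
  have h₀ : m₀ ≠ 0 := by
    intro hc; rw [hc, dm_zero] at h4; omega
  obtain ⟨i, hi⟩ := Finsupp.support_nonempty_iff.mpr h₀
  have hi1 : 1 ≤ m₀ i := Nat.one_le_iff_ne_zero.mpr (Finsupp.mem_support_iff.mp hi)
  have hle1 : Finsupp.single i 1 ≤ m₀ := Finsupp.single_le_iff.mpr hi1
  set m₁ := m₀ - Finsupp.single i 1 with hm₁
  have he1 : Finsupp.single i 1 + m₁ = m₀ := add_tsub_cancel_of_le hle1
  have hd1 : dm m₀ = 1 + dm m₁ := by rw [← he1, dm_add, dm_single]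
  have h₁ : m₁ ≠ 0 := by
    intro hc; rw [hc, dm_zero] at hd1; omega
  obtain ⟨j, hj⟩ := Finsupp.support_nonempty_iff.mpr h₁
  have hj1 : 1 ≤ m₁ j := Nat.one_le_iff_ne_zero.mpr (Finsupp.mem_support_iff.mp hj)
  have hle2 : Finsupp.single j 1 ≤ m₁ := Finsupp.single_le_iff.mpr hj1
  set m₂ := m₁ - Finsupp.single j 1 with hm₂
  have he2 : Finsupp.single j 1 + m₂ = m₁ := add_tsub_cancel_of_le hle2
  have hd2 : dm m₁ = 1 + dm m₂ := by rw [← he2, dm_add, dm_single]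
  refine ⟨Finsupp.single i 1 + Finsupp.single j 1, m₂, ?_, ?_, ?_⟩
  · rw [add_assoc, he2, he1]
  · rw [dm_add, dm_single, dm_single]
  · omega

lemma aeval_bb {τ' : Type} (g : Bool → P τ') (c : ℂ) :
    aeval g (monomial (Finsupp.single false 1 + Finsupp.single true 1) c)
      = C c * (g false * g true) := by
  rw [aeval_monomial]
  rw [Finsupp.prod_add_index (fun a _ => pow_zero (g a)) (fun a _ m n => pow_add (g a) m n)]
  simp [Finsupp.prod_single_index, algebraMap_eq]

variable [Fintype σ] [DecidableEq σ]

/-- The Bass–Connell–Wright one-monomial killing step. -/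
lemma step (F : σ → P σ) (k₀ : σ) (m₀ : σ →₀ ℕ)
    (hm₀ : m₀ ∈ (F k₀).support) (h4 : 4 ≤ dm m₀) :
    ∃ Ft : (σ ⊕ Bool) → P (σ ⊕ Bool),
      μ Ft < μ F ∧ jdet Ft = rename Sum.inl (jdet F) ∧
      ((∃ Gt, IsInv Ft Gt) → ∃ G : σ → P σ, IsInv F G) := by
  classical
  obtain ⟨β, γ, hbg, hdb, hdg⟩ := exists_split m₀ h4
  set c := coeff m₀ (F k₀) with hc
  set qβ : P (σ ⊕ Bool) := rename Sum.inl (monomial β (1:ℂ)) with hqβ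
  set qγ : P (σ ⊕ Bool) := rename Sum.inl (monomial γ (1:ℂ)) with hqγ
  set qφ : P (σ ⊕ Bool) :=
    rename Sum.inr (monomial (Finsupp.single false 1 + Finsupp.single true 1) c) with hqφ
  set φ := elem (Sum.inl k₀ : σ ⊕ Bool) (-qφ) with hφdef
  set φ' := elem (Sum.inl k₀ : σ ⊕ Bool) qφ with hφ'def
  set ψ₁ := elem (Sum.inr false : σ ⊕ Bool) qβ with hψ₁def
  set ψ₁' := elem (Sum.inr false : σ ⊕ Bool) (-qβ) with hψ₁'def
  set ψ₂ := elem (Sum.inr true : σ ⊕ Bool) qγ with hψ₂def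
  set ψ₂' := elem (Sum.inr true : σ ⊕ Bool) (-qγ) with hψ₂'def
  set E := extend F with hEdef
  refine ⟨pcomp (pcomp (pcomp φ E) ψ₁) ψ₂, ?_, ?_, ?_⟩
  case refine_2 =>
    -- Jacobian determinant
    have jφ : jdet φ = 1 := by
      refine jdet_elem _ _ ?_
      rw [map_neg, hqφ, pderiv_rename_notin Sum.inr (fun g => by simp) _, neg_zero]
    have jψ₁ : jdet ψ₁ = 1 :=
      jdet_elem _ _ (pderiv_rename_notin Sum.inl (fun g => by simp) _)
    have jψ₂ : jdet ψ₂ = 1 :=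
      jdet_elem _ _ (pderiv_rename_notin Sum.inl (fun g => by simp) _)
    have j1 : jdet (pcomp φ E) = rename Sum.inl (jdet F) := by
      rw [jdet_pcomp, jφ, map_one, mul_one, hEdef, jdet_extend]
    have j2 : jdet (pcomp (pcomp φ E) ψ₁) = rename Sum.inl (jdet F) := by
      rw [jdet_pcomp, jψ₁, one_mul, j1]
      exact bind₁_elem_rename _ _ Sum.inl (fun g => by simp) _
    rw [jdet_pcomp, jψ₂, one_mul, j2]
    exact bind₁_elem_rename _ _ Sum.inl (fun g => by simp) _
  case refine_3 =>
    -- invertibility transfer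
    rintro ⟨Gt, hGt⟩
    have hφpair : IsInv φ' φ := by
      rw [hφdef, hφ'def, hqφ]
      exact isInv_elem_rename _ Sum.inr (fun g => by simp) _
    have hψ₁pair : IsInv ψ₁ ψ₁' := by
      rw [hψ₁def, hψ₁'def, hqβ]
      exact isInv_elem_rename _ Sum.inl (fun g => by simp) _
    have hψ₂pair : IsInv ψ₂ ψ₂' := by
      rw [hψ₂def, hψ₂'def, hqγ]
      exact isInv_elem_rename _ Sum.inl (fun g => by simp) _
    have hEeq : pcomp (pcomp (pcomp φ' (pcomp (pcomp (pcomp φ E) ψ₁) ψ₂)) ψ₂') ψ₁' = E := by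
      rw [pcomp_assoc (pcomp φ E) ψ₁ ψ₂, pcomp_assoc φ E (pcomp ψ₁ ψ₂),
        ← pcomp_assoc φ' φ (pcomp E (pcomp ψ₁ ψ₂)), hφpair.1, pcomp_X_left,
        pcomp_assoc E (pcomp ψ₁ ψ₂) ψ₂', pcomp_assoc ψ₁ ψ₂ ψ₂', hψ₂pair.1, pcomp_X_right,
        pcomp_assoc E ψ₁ ψ₁', hψ₁pair.1, pcomp_X_right]
    have hinvE : IsInv E (pcomp ψ₁ (pcomp ψ₂ (pcomp Gt φ))) := by
      rw [← hEeq]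
      exact ((hφpair.comp hGt).comp hψ₂pair.symm).comp hψ₁pair.symm
    exact inv_of_extend F _ hinvE
  case refine_1 =>
    -- measure decrease
    set Ft := pcomp (pcomp (pcomp φ E) ψ₁) ψ₂ with hFtdef
    have fix₁ : ∀ r : MvPolynomial σ ℂ, bind₁ ψ₁ (rename Sum.inl r) = rename Sum.inl r :=
      fun r => bind₁_elem_rename _ _ Sum.inl (fun g => by simp) r
    have fix₂ : ∀ r : MvPolynomial σ ℂ, bind₁ ψ₂ (rename Sum.inl r) = rename Sum.inl r :=
      fun r => bind₁_elem_rename _ _ Sum.inl (fun g => by simp) r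
    have hne_ff : (Sum.inr false : σ ⊕ Bool) ≠ Sum.inl k₀ := by simp
    have hne_tt : (Sum.inr true : σ ⊕ Bool) ≠ Sum.inl k₀ := by simp
    have hne_ft : (Sum.inr false : σ ⊕ Bool) ≠ Sum.inr true := by simp
    have hne_tf : (Sum.inr true : σ ⊕ Bool) ≠ Sum.inr false := by simp
    have happ_inl : ∀ i : σ, i ≠ k₀ → Ft (Sum.inl i) = rename Sum.inl (F i) := by
      intro i hik
      show bind₁ ψ₂ (bind₁ ψ₁ (bind₁ E (φ (Sum.inl i)))) = _
      rw [hφdef, elem_ne _ _ (fun h => hik (Sum.inl_injective h)), bind₁_X_right]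
      show bind₁ ψ₂ (bind₁ ψ₁ (rename Sum.inl (F i))) = _
      rw [fix₁, fix₂]
    have happ_ff : Ft (Sum.inr false) = X (Sum.inr false) + qβ := by
      show bind₁ ψ₂ (bind₁ ψ₁ (bind₁ E (φ (Sum.inr false)))) = _
      rw [hφdef, elem_ne _ _ (by simp), bind₁_X_right]
      show bind₁ ψ₂ (bind₁ ψ₁ (X (Sum.inr false))) = _
      rw [bind₁_X_right, hψ₁def, elem_self, map_add, bind₁_X_right, hψ₂def,
        elem_ne _ _ hne_ft, hqβ, bind₁_elem_rename _ _ Sum.inl (fun g => by simp) _]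
    have happ_tt : Ft (Sum.inr true) = X (Sum.inr true) + qγ := by
      show bind₁ ψ₂ (bind₁ ψ₁ (bind₁ E (φ (Sum.inr true)))) = _
      rw [hφdef, elem_ne _ _ (by simp), bind₁_X_right]
      show bind₁ ψ₂ (bind₁ ψ₁ (X (Sum.inr true))) = _
      rw [bind₁_X_right, hψ₁def, elem_ne _ _ hne_tf, bind₁_X_right, hψ₂def, elem_self]
    have happ_k₀ : Ft (Sum.inl k₀) = rename Sum.inl (F k₀)
        - C c * ((X (Sum.inr false) + qβ) * (X (Sum.inr true) + qγ)) := by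
      show bind₁ ψ₂ (bind₁ ψ₁ (bind₁ E (φ (Sum.inl k₀)))) = _
      rw [hφdef, elem_self, map_add, bind₁_X_right, map_neg]
      have hEqφ : bind₁ E qφ = qφ := by
        rw [hqφ]
        exact bind₁_fix E Sum.inr (fun g => rfl) _
      rw [hEqφ]
      show bind₁ ψ₂ (bind₁ ψ₁ (rename Sum.inl (F k₀) + -qφ)) = _
      rw [map_add, map_neg, fix₁]
      have hψ₁qφ : bind₁ ψ₁ qφ = C c * ((X (Sum.inr false) + qβ) * X (Sum.inr true)) := by
        rw [hqφ]
        show aeval ψ₁ (rename Sum.inr _) = _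
        rw [aeval_rename, aeval_bb]
        simp only [Function.comp_apply, hψ₁def]
        rw [elem_self, elem_ne _ _ (by simp : (Sum.inr true : σ ⊕ Bool) ≠ Sum.inr false)]
      rw [hψ₁qφ, map_add, map_neg, fix₂, map_mul, map_mul, bind₁_C_right, map_add,
        bind₁_X_right, bind₁_X_right, hψ₂def, elem_ne _ _ hne_ft, elem_self]
      have : bind₁ (elem (Sum.inr true) qγ) qβ = qβ := by
        rw [hqβ]
        exact bind₁_elem_rename _ _ Sum.inl (fun g => by simp) _
      rw [this]
      ring
    -- now the measure computation
    have hXf : μp (X (Sum.inr false) : P (σ ⊕ Bool)) = 0 := by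
      rw [μp, support_X]
      simp [dm_single, w_eq_zero_of_le]
    have hXt : μp (X (Sum.inr true) : P (σ ⊕ Bool)) = 0 := by
      rw [μp, support_X]
      simp [dm_single, w_eq_zero_of_le]
    have hqβμ : μp qβ = 0 := by
      rw [hqβ, μp_rename _ Sum.inl_injective]
      refine le_antisymm (le_trans (μp_monomial_le β 1) ?_) (Nat.zero_le _)
      rw [hdb, w_eq_zero_of_le (by omega)]
    have hqγμ : μp qγ ≤ 4 ^ dm γ := by
      rw [hqγ, μp_rename _ Sum.inl_injective]
      exact le_trans (μp_monomial_le γ 1) (w_le _)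
    have X_eqm : ∀ a : σ ⊕ Bool, (X a : P (σ ⊕ Bool)) = monomial (Finsupp.single a 1) (1:ℂ) :=
      fun a => rfl
    set g := dm γ with hg
    have hDg : dm m₀ = 2 + g := by rw [← hbg, dm_add, hdb]
    set p' := F k₀ - monomial m₀ c with hp'
    have herase : μp p' + 4 ^ dm m₀ = μp (F k₀) := by
      have h := μp_erase hm₀
      rw [w, if_pos h4] at h
      exact h
    have hmon1 : qβ * qγ = rename Sum.inl (monomial m₀ (1:ℂ)) := by
      rw [hqβ, hqγ, ← map_mul, monomial_mul, one_mul, hbg]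
    have hmon2 : C c * rename (Sum.inl : σ → σ ⊕ Bool) (monomial m₀ (1:ℂ))
        = rename (Sum.inl : σ → σ ⊕ Bool) (monomial m₀ c) := by
      rw [← rename_C (Sum.inl : σ → σ ⊕ Bool) c, ← map_mul, C_mul_monomial, mul_one]
    have hk₀eq : Ft (Sum.inl k₀) = rename Sum.inl p'
        - (C c * (X (Sum.inr false) * X (Sum.inr true)) + C c * (X (Sum.inr false) * qγ)
           + C c * (qβ * X (Sum.inr true))) := by
      rw [happ_k₀, hp', map_sub, ← hmon2, ← hmon1]
      ring
    have hext1 : μp (C c * (X (Sum.inr false) * X (Sum.inr true)) : P (σ ⊕ Bool)) = 0 := by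
      have hE : C c * (X (Sum.inr false) * X (Sum.inr true)) =
          monomial (Finsupp.single (Sum.inr false : σ ⊕ Bool) 1
            + Finsupp.single (Sum.inr true) 1) c := by
        rw [X_eqm, X_eqm, monomial_mul, one_mul, C_mul_monomial, mul_one]
      rw [hE]
      refine le_antisymm (le_trans (μp_monomial_le _ _) ?_) (Nat.zero_le _)
      rw [dm_add, dm_single, dm_single, w_eq_zero_of_le (by omega)]
    have hext2 : μp (C c * (X (Sum.inr false) * qγ) : P (σ ⊕ Bool)) ≤ 4 ^ (1 + g) := by
      have hE : C c * (X (Sum.inr false) * qγ) =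
          monomial (Finsupp.single (Sum.inr false : σ ⊕ Bool) 1
            + Finsupp.mapDomain Sum.inl γ) c := by
        rw [hqγ, rename_monomial, X_eqm, monomial_mul, one_mul, C_mul_monomial, mul_one]
      rw [hE]
      refine le_trans (μp_monomial_le _ _) (le_trans ?_ (w_le (1 + g)))
      rw [dm_add, dm_single, dm_mapDomain, hg]
    have hext3 : μp (C c * (qβ * X (Sum.inr true)) : P (σ ⊕ Bool)) = 0 := by
      have hE : C c * (qβ * X (Sum.inr true)) =
          monomial (Finsupp.mapDomain Sum.inl β
            + Finsupp.single (Sum.inr true : σ ⊕ Bool) 1) c := by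
        rw [hqβ, rename_monomial, X_eqm, monomial_mul, one_mul, C_mul_monomial, mul_one]
      rw [hE]
      refine le_antisymm (le_trans (μp_monomial_le _ _) ?_) (Nat.zero_le _)
      rw [dm_add, dm_single, dm_mapDomain, hdb, w_eq_zero_of_le (by omega)]
    have hbound_k₀ : μp (Ft (Sum.inl k₀)) ≤ μp p' + 4 ^ (1 + g) := by
      rw [hk₀eq, sub_eq_add_neg]
      refine le_trans (μp_add_le _ _) ?_
      rw [μp_rename _ Sum.inl_injective, μp_neg]
      have h5 := μp_add_le (C c * (X (Sum.inr false) * X (Sum.inr true))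
          + C c * (X (Sum.inr false) * qγ)) (C c * (qβ * X (Sum.inr true)))
      have h6 := μp_add_le (C c * (X (Sum.inr false) * X (Sum.inr true) : P (σ ⊕ Bool)))
          (C c * (X (Sum.inr false) * qγ))
      omega
    have hbound_ff : μp (Ft (Sum.inr false)) = 0 := by
      rw [happ_ff]
      refine le_antisymm (le_trans (μp_add_le _ _) ?_) (Nat.zero_le _)
      rw [hXf, hqβμ]
    have hbound_tt : μp (Ft (Sum.inr true)) ≤ 4 ^ g := by
      rw [happ_tt]
      refine le_trans (μp_add_le _ _) ?_
      rw [hXt, zero_add]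
      exact hqγμ
    have hsum_inl : ∑ i : σ, μp (Ft (Sum.inl i)) ≤
        (∑ i ∈ Finset.univ.erase k₀, μp (F i)) + (μp p' + 4 ^ (1 + g)) := by
      rw [← Finset.sum_erase_add Finset.univ _ (Finset.mem_univ k₀)]
      refine Nat.add_le_add ?_ hbound_k₀
      refine Finset.sum_le_sum fun i hi => ?_
      rw [happ_inl i (Finset.ne_of_mem_erase hi), μp_rename _ Sum.inl_injective]
    have hμFt : μ Ft ≤ (∑ i ∈ Finset.univ.erase k₀, μp (F i)) + (μp p' + 4 ^ (1 + g))
        + 4 ^ g := by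
      rw [μ, Fintype.sum_sum_type]
      have hb : ∑ b : Bool, μp (Ft (Sum.inr b)) ≤ 4 ^ g := by
        rw [Fintype.sum_bool, hbound_ff, add_zero]
        exact hbound_tt
      omega
    have hμF : μ F = (∑ i ∈ Finset.univ.erase k₀, μp (F i)) + (μp p' + 4 ^ (2 + g)) := by
      rw [μ, ← Finset.sum_erase_add Finset.univ _ (Finset.mem_univ k₀)]
      rw [← herase, hDg]
    have hpow : 4 ^ (1 + g) + 4 ^ g < 4 ^ (2 + g) := by
      have h1 : (4:ℕ) ^ (1 + g) = 4 * 4 ^ g := by rw [pow_add, pow_one]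
      have h2 : (4:ℕ) ^ (2 + g) = 16 * 4 ^ g := by rw [pow_add]; norm_num
      have h3 : 1 ≤ (4:ℕ) ^ g := Nat.one_le_pow g 4 (by norm_num)
      omega
    omega

/-- Units in multivariate polynomial rings over `ℂ` are nonzero constants. -/
lemma eq_C_of_isUnit : ∀ (n : ℕ) (p : MvPolynomial (Fin n) ℂ), IsUnit p →
    ∃ c : ℂ, c ≠ 0 ∧ p = C c := by
  intro n
  induction n with
  | zero =>
      intro p hp
      obtain ⟨c, rfl⟩ := C_surjective (Fin 0) p
      refine ⟨c, ?_, rfl⟩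
      have h := hp.map (constantCoeff (σ := Fin 0) (R := ℂ))
      rw [constantCoeff_C] at h
      exact h.ne_zero
  | succ n ih =>
      intro p hp
      have hP : IsUnit (finSuccEquiv ℂ n p) := hp.map (finSuccEquiv ℂ n)
      obtain ⟨h0, hn⟩ := Polynomial.isUnit_iff_coeff_isUnit_isNilpotent.mp hP
      have hC : finSuccEquiv ℂ n p = Polynomial.C ((finSuccEquiv ℂ n p).coeff 0) := by
        ext i
        cases i with
        | zero => simp
        | succ i =>
            have hz := (hn (i+1) (by omega)).eq_zero
            rw [Polynomial.coeff_C, if_neg (by omega), hz]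
      obtain ⟨c, hc0, hcc⟩ := ih _ h0
      refine ⟨c, hc0, ?_⟩
      have hps : p = (finSuccEquiv ℂ n).symm (Polynomial.C (C c)) := by
        rw [← hcc, ← hC]
        exact ((finSuccEquiv ℂ n).symm_apply_apply p).symm
      rw [hps]
      exact RingHom.congr_fun (finSuccEquiv_comp_C_eq_C n) c

/-- Base case: degree at most 3, use the hypothesis. -/
lemma base (h : ∀ n : ℕ, 1 ≤ n → JlinSet n 3 = JSet n 3)
    {σ : Type} [Fintype σ] [DecidableEq σ] (F : σ → P σ)
    (h0 : μ F = 0) (hc : ∃ c : ℂ, c ≠ 0 ∧ jdet F = C c) : ∃ G : σ → P σ, IsInv F G := by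
  classical
  cases isEmpty_or_nonempty σ with
  | inl hemp => exact ⟨F, funext fun k => isEmptyElim k, funext fun k => isEmptyElim k⟩
  | inr hne =>
      obtain ⟨c, hc0, hcd⟩ := hc
      have hn1 : 1 ≤ Fintype.card σ := Fintype.card_pos
      set e := Fintype.equivFin σ with he
      set F' : Fin (Fintype.card σ) → MvPolynomial (Fin (Fintype.card σ)) ℂ :=
        fun i => rename e (F (e.symm i)) with hF'
      have hjd : jdet F' = rename e (jdet F) := by
        have hm : jmat F' = ((jmat F).submatrix e.symm e.symm).map (rename e) := by
          refine Matrix.ext fun i j => ?_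
          show pderiv i (rename e (F (e.symm j))) = rename e (pderiv (e.symm i) (F (e.symm j)))
          conv_lhs => rw [← e.apply_symm_apply i]
          exact pderiv_rename e.injective (e.symm i) (F (e.symm j))
        rw [jdet, hm, jdet, ← Matrix.det_submatrix_equiv_self e.symm (jmat F),
          AlgHom.map_det]
        rfl
      have hmem : F' ∈ JlinSet (Fintype.card σ) 3 := by
        refine ⟨fun i => ?_, c, hc0, ?_⟩
        · refine le_trans (totalDegree_rename_le _ _) (totalDegree_le_of_μp_zero ?_)
          exact (Finset.sum_eq_zero_iff.mp h0) (e.symm i) (Finset.mem_univ _)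
        · rw [jacDet_eq_jdet, hjd, hcd, rename_C]
      rw [h (Fintype.card σ) hn1] at hmem
      obtain ⟨-, G', hG1, hG2⟩ := hmem
      refine ⟨fun s => rename e.symm (G' (e s)), ?_, ?_⟩
      · funext k
        show bind₁ (fun s => rename (⇑e.symm) (G' (e s))) (F k) = X k
        have h2 := hG2 (e k)
        have hFk : F' (e k) = rename e (F k) := by
          show rename ⇑e (F (e.symm (e k))) = rename ⇑e (F k)
          rw [e.symm_apply_apply]
        rw [hFk] at h2
        have h2' : aeval (G' ∘ ⇑e) (F k) = X (e k) := by
          rw [← aeval_rename]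
          exact h2
        have h3 := congrArg (rename (⇑e.symm)) h2'
        have hL : rename (⇑e.symm) (aeval (G' ∘ ⇑e) (F k))
            = aeval (fun s => rename (⇑e.symm) (G' (e s))) (F k) := by
          rw [rename_eq_aeval]
          rw [aeval_aeval']
          rfl
        rw [hL, rename_X, e.symm_apply_apply] at h3
        exact h3
      · funext k
        show bind₁ F (rename (⇑e.symm) (G' (e k))) = X k
        have h1 : aeval F' (G' (e k)) = X (e k) := hG1 (e k)
        have h1' := congrArg (rename (⇑e.symm)) h1
        have hL : rename (⇑e.symm) (aeval F' (G' (e k)))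
            = aeval (fun j => rename (⇑e.symm) (F' j)) (G' (e k)) := by
          rw [rename_eq_aeval]
          rw [aeval_aeval']
        have hFj : (fun j => rename (⇑e.symm) (F' j)) = fun j => F (e.symm j) := by
          funext j
          rw [hF', rename_rename]
          have hid : (⇑e.symm ∘ ⇑e) = id := by funext s; simp
          rw [hid, rename_id, AlgHom.id_apply]
        rw [hL, hFj, rename_X, e.symm_apply_apply] at h1'
        show aeval F (rename (⇑e.symm) (G' (e k))) = X k
        rw [aeval_rename]
        exact h1'

/-- Main induction on the measure. -/
lemma main (h : ∀ n : ℕ, 1 ≤ n → JlinSet n 3 = JSet n 3) :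
    ∀ (N : ℕ) (σ : Type) [Fintype σ] [DecidableEq σ] (F : σ → P σ),
      μ F ≤ N → (∃ c : ℂ, c ≠ 0 ∧ jdet F = C c) → ∃ G : σ → P σ, IsInv F G := by
  intro N
  induction N with
  | zero =>
      intro σ _ _ F hμ hc
      exact base h F (Nat.le_zero.mp hμ) hc
  | succ N ih =>
      intro σ _ _ F hμ hc
      by_cases h0 : μ F = 0
      · exact base h F h0 hc
      · obtain ⟨k₀, hk₀⟩ : ∃ k₀, μp (F k₀) ≠ 0 := by
          by_contra hall
          push_neg at hall
          exact h0 (Finset.sum_eq_zero fun k _ => hall k)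
        obtain ⟨m₀, hm₀, hw⟩ : ∃ m₀ ∈ (F k₀).support, w (dm m₀) ≠ 0 := by
          by_contra hall
          push_neg at hall
          exact hk₀ (Finset.sum_eq_zero fun m hm => hall m hm)
        have h4 : 4 ≤ dm m₀ := by
          by_contra hlt
          exact hw (w_eq_zero_of_le (by omega))
        obtain ⟨Ft, hltμ, hjd, htrans⟩ := step F k₀ m₀ hm₀ h4
        obtain ⟨c, hc0, hcd⟩ := hc
        exact htrans (ih (σ ⊕ Bool) Ft (by omega) ⟨c, hc0, by rw [hjd, hcd, rename_C]⟩)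

end BCWRed

/-- **Bass–Connell–Wright reduction to degree 3**: if `𝒥^lin_{n,3} = 𝒥_{n,3}`
for every `n ≥ 1`, then `𝒥^lin_{n,d} = 𝒥_{n,d}` for every `n ≥ 1` and `d ≥ 1`. -/
theorem cubic_reduction
    (h : ∀ n : ℕ, 1 ≤ n → JlinSet n 3 = JSet n 3) :
    ∀ n : ℕ, 1 ≤ n → ∀ d : ℕ, 1 ≤ d → JlinSet n d = JSet n d := by
  intro n hn d hd
  ext F
  constructor
  · rintro ⟨hpoly, c, hc0, hcd⟩
    obtain ⟨G, hG1, hG2⟩ := BCWRed.main h (BCWRed.μ F) (Fin n) F le_rfl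
      ⟨c, hc0, by rw [← BCWRed.jacDet_eq_jdet]; exact hcd⟩
    exact ⟨hpoly, G, fun i => congrFun hG2 i, fun i => congrFun hG1 i⟩
  · rintro ⟨hpoly, G, hG1, hG2⟩
    refine ⟨hpoly, ?_⟩
    have hcomp : BCWRed.pcomp G F = X := funext fun k => by simp only [BCWRed.pcomp]; exact hG1 k
    have hjd : BCWRed.jdet F * bind₁ F (BCWRed.jdet G) = 1 := by
      have hh := BCWRed.jdet_pcomp G F
      rw [hcomp, BCWRed.jdet_X] at hh
      exact hh.symm
    obtain ⟨c, hc0, hcc⟩ := BCWRed.eq_C_of_isUnit n (BCWRed.jdet F)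
      (IsUnit.of_mul_eq_one _ hjd)
    exact ⟨c, hc0, by rw [BCWRed.jacDet_eq_jdet]; exact hcc⟩
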